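/- Let N be jobs with processing times p and setup times s satisfying the triangle inequality, and C ⊆ N. For j ∈ C define θ_j = p(j) + max{s(k,j) : k ∈ C, k ≠ j} (with θ_j = p(j) if C = {j}). Then for every subset D ⊆ C, the minimum makespan satisfies T(D) ≥ T(C) - ∑_{j ∈ C \ D} θ_j. Equivalently, the Benders cut T ≥ T(C) - ∑_{j∈C}(1 - z_j)θ_j is valid for every binary assignment z with support D = {j ∈ C : z_j = 1} and T ≥ T(D). -/

import Mathlib

def setupTime {ι : Type*} (s : ι → ι → ℝ) (L : List ι) : ℝ :=
  ((L.zip L.tail).map fun q => s q.1 q.2).sum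

noncomputable def minMakespan {ι : Type*} [DecidableEq ι]
    (p : ι → ℝ) (s : ι → ι → ℝ) (C : Finset ι) : ℝ :=
  sInf {t | ∃ L : List ι, L.Nodup ∧ L.toFinset = C ∧
    t = (L.map p).sum + setupTime s L}

section Aux
variable {ι : Type*} [DecidableEq ι]

omit [DecidableEq ι] in
lemma setupTime_cons₂ (s : ι → ι → ℝ) (x y : ι) (t : List ι) :
    setupTime s (x :: y :: t) = s x y + setupTime s (y :: t) := by
  simp [setupTime]

omit [DecidableEq ι] in
lemma setupTime_append_singleton (s : ι → ι → ℝ) (a : ι) :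
    ∀ (L : List ι) (h : L ≠ []),
      setupTime s (L ++ [a]) = setupTime s L + s (L.getLast h) a
  | [x], _ => by simp [setupTime]
  | x :: y :: t, _ => by
      have h2 : (y :: t : List ι) ≠ [] := by simp
      have ih := setupTime_append_singleton s a (y :: t) h2
      simp only [List.cons_append] at ih ⊢
      rw [setupTime_cons₂, setupTime_cons₂, ih, List.getLast_cons h2]
      ring

omit [DecidableEq ι] in
lemma setupTime_nonneg (s : ι → ι → ℝ) (hs : ∀ j k, 0 ≤ s j k) (L : List ι) :
    0 ≤ setupTime s L := by
  apply List.sum_nonneg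
  intro x hx
  obtain ⟨q, _, rfl⟩ := List.mem_map.mp hx
  exact hs _ _

lemma maxterm_nonneg (s : ι → ι → ℝ) (hs : ∀ j k, 0 ≤ s j k) (C : Finset ι) (a : ι) :
    0 ≤ (((C.erase a).image fun k => s k a).max.unbotD 0) := by
  rcases h : ((C.erase a).image fun k => s k a).max with _ | m
  · exact le_rfl
  · have hm := Finset.mem_of_max h
    obtain ⟨k, _, hk⟩ := Finset.mem_image.mp hm
    subst hk; exact hs k a

lemma le_maxterm (s : ι → ι → ℝ) (C : Finset ι) (a k : ι) (hk : k ∈ C.erase a) :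
    s k a ≤ (((C.erase a).image fun k => s k a).max.unbotD 0) := by
  have hmem : s k a ∈ (C.erase a).image fun k => s k a :=
    Finset.mem_image_of_mem _ hk
  have hle := Finset.le_max hmem
  rcases h : ((C.erase a).image fun k => s k a).max with _ | m
  · rw [h] at hle; exact absurd hle (WithBot.not_coe_le_bot _)
  · rw [h] at hle
    exact WithBot.coe_le_coe.mp hle

lemma extend_list (p : ι → ℝ) (hp : ∀ j, 0 ≤ p j) (s : ι → ι → ℝ) (hs : ∀ j k, 0 ≤ s j k)
    (C : Finset ι) (E : Finset ι) :
    ∀ L : List ι, L.Nodup → (∀ x ∈ E, x ∉ L) → E ⊆ C → L.toFinset ⊆ C →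
      ∃ M : List ι, M.Nodup ∧ M.toFinset = L.toFinset ∪ E ∧
        (M.map p).sum + setupTime s M ≤ (L.map p).sum + setupTime s L +
          ∑ j ∈ E, (p j + (((C.erase j).image fun k => s k j).max.unbotD 0)) := by
  induction E using Finset.induction_on with
  | empty => intro L hL _ _ _; exact ⟨L, hL, by simp, by simp⟩
  | @insert a E' ha ih =>
    intro L hL hdisj hEC hLC
    have haL : a ∉ L := hdisj a (Finset.mem_insert_self a E')
    have haC : a ∈ C := hEC (Finset.mem_insert_self a E')
    have hL' : (L ++ [a]).Nodup := by
      simp [List.nodup_append, hL, haL]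
      intro x hx h; exact haL (h ▸ hx)
    have hval : (((L ++ [a]).map p).sum + setupTime s (L ++ [a])) ≤
        (L.map p).sum + setupTime s L +
          (p a + (((C.erase a).image fun k => s k a).max.unbotD 0)) := by
      rcases eq_or_ne L [] with rfl | hne
      · have h0 := maxterm_nonneg s hs C a
        simp only [List.nil_append, List.map_cons, List.map_nil, List.sum_cons,
          List.sum_nil]
        have : setupTime s [a] = 0 := by simp [setupTime]
        rw [this]
        simp [setupTime]
        linarith
      · rw [setupTime_append_singleton s a L hne]
        have hk : L.getLast hne ∈ C.erase a := by
          refine Finset.mem_erase.mpr ⟨?_, hLC ?_⟩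
          · intro h; exact haL (h ▸ L.getLast_mem hne)
          · exact List.mem_toFinset.mpr (L.getLast_mem hne)
        have := le_maxterm s C a (L.getLast hne) hk
        simp only [List.map_append, List.sum_append, List.map_cons, List.map_nil,
          List.sum_cons, List.sum_nil]
        linarith
    obtain ⟨M, hM1, hM2, hM3⟩ := ih (L ++ [a]) hL'
      (by
        intro x hx
        simp only [List.mem_append, List.mem_singleton]
        rintro (h | rfl)
        · exact hdisj x (Finset.mem_insert_of_mem hx) h
        · exact ha hx)
      (fun x hx => hEC (Finset.mem_insert_of_mem hx))
      (by
        intro x hx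
        simp only [List.toFinset_append, List.toFinset_cons, List.toFinset_nil,
          Finset.mem_union, Finset.mem_insert] at hx
        rcases hx with h | h
        · exact hLC h
        · simp only [Finset.mem_insert, Finset.notMem_empty, or_false] at h
          exact h ▸ haC)
    refine ⟨M, hM1, ?_, ?_⟩
    · rw [hM2]
      ext x
      simp only [List.toFinset_append, List.toFinset_cons, List.toFinset_nil,
        Finset.mem_union, Finset.mem_insert, Finset.notMem_empty, or_false]
      tauto
    · rw [Finset.sum_insert ha]
      linarith

end Aux

theorem stmt14 {ι : Type*} [DecidableEq ι]
    (p : ι → ℝ) (hp : ∀ j, 0 ≤ p j)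
    (s : ι → ι → ℝ) (hs : ∀ j k, 0 ≤ s j k)
    (htri : ∀ j k l, s j l ≤ s j k + s k l)
    (C D : Finset ι) (hD : D ⊆ C) :
    minMakespan p s C -
        ∑ j ∈ C \ D, (p j + (((C.erase j).image fun k => s k j).max.unbotD 0)) ≤
      minMakespan p s D := by
  have hbdd : BddBelow {t | ∃ L : List ι, L.Nodup ∧ L.toFinset = C ∧
      t = (L.map p).sum + setupTime s L} := by
    refine ⟨0, ?_⟩
    rintro t ⟨L, _, _, rfl⟩
    have h1 : 0 ≤ (L.map p).sum := List.sum_nonneg (by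
      intro x hx; obtain ⟨q, _, rfl⟩ := List.mem_map.mp hx; exact hp q)
    have h2 := setupTime_nonneg s hs L
    linarith
  simp only [minMakespan]
  refine le_csInf ⟨_, D.toList, D.nodup_toList, Finset.toList_toFinset D, rfl⟩ ?_
  rintro t ⟨L, hLnd, hLD, rfl⟩
  rw [sub_le_iff_le_add]
  obtain ⟨M, hM1, hM2, hM3⟩ := extend_list p hp s hs C (C \ D) L hLnd
    (by intro x hx h; rw [← List.mem_toFinset, hLD] at h
        exact (Finset.mem_sdiff.mp hx).2 h)
    (Finset.sdiff_subset)
    (hLD ▸ hD)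
  have hMC : M.toFinset = C := by
    rw [hM2, hLD, Finset.union_sdiff_of_subset hD]
  have h := csInf_le hbdd ⟨M, hM1, hMC, rfl⟩
  linarith
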